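/- (Theorem 4.1, main theorem, for a Chaplygin system on a trivial principal bundle Q = ℝ^{n̄} × ℝ^m.) Suppose f: ℝ^{n̄} → ℝ is smooth, nowhere-vanishing, and satisfies df ∧ Θ̄ = f·Ξ pointwise on the reduced phase space ℝ^{n̄} × ℝ^{n̄}. Let E ∈ ℝ and let W̄: ℝ^{n̄} → ℝ be a smooth solution of the Chaplygin Hamilton–Jacobi equation H̄(r, ∇W̄(r)/f(r)) = E for all r ∈ ℝ^{n̄}. Define the one-form γ: Q → ℝ^{n̄+m} by γ(r,s) := hl^M(r)·(∇W̄(r)/f(r)). Then: (i) H((r,s), γ(r,s)) = E for every (r,s) ∈ Q (the nonholonomic Hamilton–Jacobi equation holds); and (ii) dγ vanishes on the constraint distribution: for every q = (r,s) and all v, w ∈ ℝ^{n̄}, setting v^h = (v, −A(r)v) and w^h = (w, −A(r)w), one has ⟨Dγ(q)[v^h], w^h⟩ − ⟨Dγ(q)[w^h], v^h⟩ = 0. -/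

import Mathlib

noncomputable section

open Matrix

/-- Horizontal lift of the connection `A` at base point `r`, as the
`(n̄+m) × n̄` matrix `v ↦ (v, −A v)`. -/
def hlD {nb m : ℕ} (A : Matrix (Fin m) (Fin nb) ℝ) : Matrix (Fin nb ⊕ Fin m) (Fin nb) ℝ :=
  Matrix.of (Sum.elim (1 : Matrix (Fin nb) (Fin nb) ℝ) (-A))

/-- Reduced kinetic metric `ḡ = (hl^D)ᵀ g hl^D`. -/
def gbar {nb m : ℕ} (A : Matrix (Fin m) (Fin nb) ℝ)
    (g : Matrix (Fin nb ⊕ Fin m) (Fin nb ⊕ Fin m) ℝ) : Matrix (Fin nb) (Fin nb) ℝ :=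
  (hlD A)ᵀ * g * hlD A

/-- Momentum horizontal lift `hl^M = g · hl^D · ḡ⁻¹`. -/
def hlM {nb m : ℕ} (A : Matrix (Fin m) (Fin nb) ℝ)
    (g : Matrix (Fin nb ⊕ Fin m) (Fin nb ⊕ Fin m) ℝ) : Matrix (Fin nb ⊕ Fin m) (Fin nb) ℝ :=
  g * hlD A * (gbar A g)⁻¹

/-- Gradient of a function on `ℝᵏ` with respect to the standard basis. -/
def grad {k : ℕ} (W : (Fin k → ℝ) → ℝ) (r : Fin k → ℝ) : Fin k → ℝ :=
  fun i => fderiv ℝ W r (Pi.single i 1)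

/-- Curvature of the connection `A`:
`B_a(r)(u,v) = ∑_{i,j} ∂A_{aj}/∂r_i · (u_i v_j − v_i u_j)`. -/
def curv {nb m : ℕ} (A : (Fin nb → ℝ) → Matrix (Fin m) (Fin nb) ℝ)
    (r u v : Fin nb → ℝ) : Fin m → ℝ :=
  fun a => ∑ i, ∑ j,
    fderiv ℝ (fun r' => A r' a j) r (Pi.single i 1) * (u i * v j - v i * u j)

/-- Momentum map pairing: the last `m` components of `hl^M(r)·p̄`. -/
def momJ {nb m : ℕ} (A : (Fin nb → ℝ) → Matrix (Fin m) (Fin nb) ℝ)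
    (g : (Fin nb → ℝ) → Matrix (Fin nb ⊕ Fin m) (Fin nb ⊕ Fin m) ℝ)
    (r pbar : Fin nb → ℝ) : Fin m → ℝ :=
  fun a => (hlM (A r) (g r)).mulVec pbar (Sum.inr a)

/-- The one-form `γ(r,s) = hl^M(r)·(∇W̄(r)/f(r))` on `Q = ℝ^{n̄} × ℝ^m`. -/
def gammaForm {nb m : ℕ} (A : (Fin nb → ℝ) → Matrix (Fin m) (Fin nb) ℝ)
    (g : (Fin nb → ℝ) → Matrix (Fin nb ⊕ Fin m) (Fin nb ⊕ Fin m) ℝ)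
    (f W : (Fin nb → ℝ) → ℝ) (q : (Fin nb → ℝ) × (Fin m → ℝ)) : Fin nb ⊕ Fin m → ℝ :=
  (hlM (A q.1) (g q.1)).mulVec ((f q.1)⁻¹ • grad W q.1)

section basic
variable {nb m : ℕ}

lemma hlD_mulVec_inl (A : Matrix (Fin m) (Fin nb) ℝ) (u : Fin nb → ℝ) (i : Fin nb) :
    (hlD A).mulVec u (Sum.inl i) = u i := by
  simp [hlD, Matrix.mulVec, dotProduct, Matrix.one_apply, Sum.elim]

lemma hlD_mulVec_inr (A : Matrix (Fin m) (Fin nb) ℝ) (u : Fin nb → ℝ) (a : Fin m) :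
    (hlD A).mulVec u (Sum.inr a) = -(A.mulVec u a) := by
  simp [hlD, Matrix.mulVec, dotProduct, Sum.elim]

lemma mulVec_dot_mulVec {α β γ : Type*} [Fintype α] [Fintype β] [Fintype γ]
    (P : Matrix α β ℝ) (Q : Matrix α γ ℝ) (x : β → ℝ) (y : γ → ℝ) :
    P.mulVec x ⬝ᵥ Q.mulVec y = x ⬝ᵥ (Pᵀ * Q).mulVec y := by
  rw [← Matrix.mulVec_mulVec, Matrix.dotProduct_mulVec x, Matrix.vecMul_transpose,
    Matrix.dotProduct_mulVec (P.mulVec x)]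

lemma hlD_mulVec_ne_zero (A : Matrix (Fin m) (Fin nb) ℝ) {x : Fin nb → ℝ} (hx : x ≠ 0) :
    (hlD A).mulVec x ≠ 0 := by
  intro h
  apply hx
  funext i
  have := congrFun h (Sum.inl i)
  simpa [hlD_mulVec_inl] using this

lemma gbar_posDef {A : Matrix (Fin m) (Fin nb) ℝ}
    {g : Matrix (Fin nb ⊕ Fin m) (Fin nb ⊕ Fin m) ℝ} (hg : g.PosDef) :
    (gbar A g).PosDef := by
  rw [Matrix.posDef_iff_dotProduct_mulVec]
  constructor
  · have hgs : gᴴ = g := hg.isHermitian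
    show (gbar A g)ᴴ = gbar A g
    unfold gbar
    rw [Matrix.conjTranspose_mul, Matrix.conjTranspose_mul]
    simp only [Matrix.conjTranspose_eq_transpose_of_trivial] at *
    rw [Matrix.transpose_transpose, hgs, Matrix.mul_assoc]
  · intro x hx
    have h1 : star x ⬝ᵥ (gbar A g).mulVec x
        = ((hlD A).mulVec x) ⬝ᵥ g.mulVec ((hlD A).mulVec x) := by
      rw [star_trivial]
      rw [Matrix.mulVec_mulVec, mulVec_dot_mulVec, gbar, Matrix.mul_assoc]
    rw [h1]
    have := hg.dotProduct_mulVec_pos (hlD_mulVec_ne_zero A hx)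
    simpa using this

lemma gbar_det_ne_zero {A : Matrix (Fin m) (Fin nb) ℝ}
    {g : Matrix (Fin nb ⊕ Fin m) (Fin nb ⊕ Fin m) ℝ} (hg : g.PosDef) :
    (gbar A g).det ≠ 0 := (gbar_posDef hg).det_pos.ne'

lemma hlDT_mul_hlM {A : Matrix (Fin m) (Fin nb) ℝ}
    {g : Matrix (Fin nb ⊕ Fin m) (Fin nb ⊕ Fin m) ℝ} (hg : g.PosDef) :
    (hlD A)ᵀ * hlM A g = 1 := by
  unfold hlM
  rw [← Matrix.mul_assoc, ← Matrix.mul_assoc]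
  show gbar A g * (gbar A g)⁻¹ = 1
  exact Matrix.mul_nonsing_inv _ ((gbar_det_ne_zero hg).isUnit)

lemma hlMT_mul_hlD {A : Matrix (Fin m) (Fin nb) ℝ}
    {g : Matrix (Fin nb ⊕ Fin m) (Fin nb ⊕ Fin m) ℝ} (hg : g.PosDef) :
    (hlM A g)ᵀ * hlD A = 1 := by
  have h := congrArg Matrix.transpose (hlDT_mul_hlM (A := A) hg)
  simpa [Matrix.transpose_mul] using h

lemma hlM_dot {A : Matrix (Fin m) (Fin nb) ℝ}
    {g : Matrix (Fin nb ⊕ Fin m) (Fin nb ⊕ Fin m) ℝ} (hg : g.PosDef)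
    (p u : Fin nb → ℝ) :
    (hlM A g).mulVec p ⬝ᵥ (hlD A).mulVec u = p ⬝ᵥ u := by
  rw [mulVec_dot_mulVec, hlMT_mul_hlD hg, Matrix.one_mulVec]

end basic

section smooth
variable {E : Type*} [NormedAddCommGroup E] [NormedSpace ℝ E]

lemma contDiff_entry_mul {α β γ : Type*} [Fintype β] {M : E → Matrix α β ℝ}
    {N : E → Matrix β γ ℝ}
    (hM : ∀ i j, ContDiff ℝ (⊤ : ℕ∞) fun r => M r i j)
    (hN : ∀ i j, ContDiff ℝ (⊤ : ℕ∞) fun r => N r i j)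
    (i : α) (j : γ) : ContDiff ℝ (⊤ : ℕ∞) fun r => (M r * N r) i j := by
  simp only [Matrix.mul_apply]
  exact ContDiff.sum fun k _ => (hM i k).mul (hN k j)

lemma contDiff_det {n' : Type*} [Fintype n'] [DecidableEq n'] {M : E → Matrix n' n' ℝ}
    (hM : ∀ i j, ContDiff ℝ (⊤ : ℕ∞) fun r => M r i j) :
    ContDiff ℝ (⊤ : ℕ∞) fun r => (M r).det := by
  simp only [Matrix.det_apply']
  exact ContDiff.sum fun σ _ => contDiff_const.mul (contDiff_prod fun i _ => hM (σ i) i)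

lemma contDiff_adjugate {n' : Type*} [Fintype n'] [DecidableEq n'] {M : E → Matrix n' n' ℝ}
    (hM : ∀ i j, ContDiff ℝ (⊤ : ℕ∞) fun r => M r i j) (i j : n') :
    ContDiff ℝ (⊤ : ℕ∞) fun r => (M r).adjugate i j := by
  simp only [Matrix.adjugate_apply]
  apply contDiff_det
  intro k l
  simp only [Matrix.updateRow_apply]
  by_cases h : k = j
  · simp only [if_pos h]
    exact contDiff_const
  · simpa [h] using hM k l

lemma contDiff_inv_entry {n' : Type*} [Fintype n'] [DecidableEq n'] {M : E → Matrix n' n' ℝ}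
    (hM : ∀ i j, ContDiff ℝ (⊤ : ℕ∞) fun r => M r i j)
    (hdet : ∀ x, (M x).det ≠ 0) (i j : n') :
    ContDiff ℝ (⊤ : ℕ∞) fun r => (M r)⁻¹ i j := by
  have heq : (fun r => (M r)⁻¹ i j) = fun r => ((M r).det)⁻¹ * (M r).adjugate i j := by
    funext r
    rw [Matrix.inv_def, Ring.inverse_eq_inv]
    simp [smul_eq_mul]
  rw [heq]
  exact ((contDiff_det hM).inv hdet).mul (contDiff_adjugate hM i j)

lemma basis_expand {k : ℕ} (v : Fin k → ℝ) :
    v = ∑ i, v i • (Pi.single i (1 : ℝ) : Fin k → ℝ) := by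
  funext j
  simp [Pi.single_apply, Finset.sum_ite_eq', mul_comm]

lemma fderiv_basis_apply {k : ℕ} (φ : (Fin k → ℝ) → ℝ) (r : Fin k → ℝ) (v : Fin k → ℝ) :
    fderiv ℝ φ r v = ∑ i, v i * fderiv ℝ φ r (Pi.single i 1) := by
  have hb := basis_expand v
  conv_lhs => rw [hb]
  rw [map_sum]
  simp [smul_eq_mul]

end smooth

section entries
variable {nb m : ℕ}
variable {A : (Fin nb → ℝ) → Matrix (Fin m) (Fin nb) ℝ}
variable {g : (Fin nb → ℝ) → Matrix (Fin nb ⊕ Fin m) (Fin nb ⊕ Fin m) ℝ}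
variable {f W : (Fin nb → ℝ) → ℝ}

lemma contDiff_hlD_entry (hA : ∀ a i, ContDiff ℝ (⊤ : ℕ∞) fun r => A r a i)
    (k : Fin nb ⊕ Fin m) (i : Fin nb) :
    ContDiff ℝ (⊤ : ℕ∞) fun r => hlD (A r) k i := by
  cases k with
  | inl i' => exact contDiff_const
  | inr a =>
    have : (fun r => hlD (A r) (Sum.inr a) i) = fun r => -(A r a i) := rfl
    rw [this]
    exact (hA a i).neg

lemma contDiff_gbar_entry (hA : ∀ a i, ContDiff ℝ (⊤ : ℕ∞) fun r => A r a i)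
    (hg : ∀ i j, ContDiff ℝ (⊤ : ℕ∞) fun r => g r i j) (i j : Fin nb) :
    ContDiff ℝ (⊤ : ℕ∞) fun r => gbar (A r) (g r) i j := by
  have h1 : ∀ (i : Fin nb) (j : Fin nb ⊕ Fin m),
      ContDiff ℝ (⊤ : ℕ∞) fun r => (hlD (A r))ᵀ i j := fun i j => contDiff_hlD_entry hA j i
  exact contDiff_entry_mul (contDiff_entry_mul h1 hg) (contDiff_hlD_entry hA) i j

lemma contDiff_gbarInv_entry (hA : ∀ a i, ContDiff ℝ (⊤ : ℕ∞) fun r => A r a i)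
    (hg : ∀ i j, ContDiff ℝ (⊤ : ℕ∞) fun r => g r i j)
    (hgpos : ∀ r, (g r).PosDef) (i j : Fin nb) :
    ContDiff ℝ (⊤ : ℕ∞) fun r => (gbar (A r) (g r))⁻¹ i j :=
  contDiff_inv_entry (contDiff_gbar_entry hA hg)
    (fun r => gbar_det_ne_zero (hgpos r)) i j

lemma contDiff_hlM_entry (hA : ∀ a i, ContDiff ℝ (⊤ : ℕ∞) fun r => A r a i)
    (hg : ∀ i j, ContDiff ℝ (⊤ : ℕ∞) fun r => g r i j)
    (hgpos : ∀ r, (g r).PosDef) (k : Fin nb ⊕ Fin m) (j : Fin nb) :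
    ContDiff ℝ (⊤ : ℕ∞) fun r => hlM (A r) (g r) k j :=
  contDiff_entry_mul (contDiff_entry_mul hg (contDiff_hlD_entry hA))
    (contDiff_gbarInv_entry hA hg hgpos) k j

lemma contDiff_grad_entry (hW : ContDiff ℝ (⊤ : ℕ∞) W) (i : Fin nb) :
    ContDiff ℝ (⊤ : ℕ∞) fun r => grad W r i := by
  have h1 : ContDiff ℝ (⊤ : ℕ∞) (fderiv ℝ W) := hW.fderiv_right (by simp)
  exact h1.clm_apply contDiff_const

lemma contDiff_pbar_entry (hf : ContDiff ℝ (⊤ : ℕ∞) f) (hf0 : ∀ r, f r ≠ 0)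
    (hW : ContDiff ℝ (⊤ : ℕ∞) W) (j : Fin nb) :
    ContDiff ℝ (⊤ : ℕ∞) fun r => ((f r)⁻¹ • grad W r) j := by
  simp only [Pi.smul_apply, smul_eq_mul]
  exact (hf.inv hf0).mul (contDiff_grad_entry hW j)

lemma contDiff_Fdel_entry (hA : ∀ a i, ContDiff ℝ (⊤ : ℕ∞) fun r => A r a i)
    (hg : ∀ i j, ContDiff ℝ (⊤ : ℕ∞) fun r => g r i j)
    (hgpos : ∀ r, (g r).PosDef)
    (hf : ContDiff ℝ (⊤ : ℕ∞) f) (hf0 : ∀ r, f r ≠ 0)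
    (hW : ContDiff ℝ (⊤ : ℕ∞) W) (k : Fin nb ⊕ Fin m) :
    ContDiff ℝ (⊤ : ℕ∞) fun r =>
      (hlM (A r) (g r)).mulVec ((f r)⁻¹ • grad W r) k := by
  simp only [Matrix.mulVec, dotProduct]
  exact ContDiff.sum fun j _ =>
    (contDiff_hlM_entry hA hg hgpos k j).mul (contDiff_pbar_entry hf hf0 hW j)

end entries

section parti
variable {nb m : ℕ}

lemma part_i_key {A : Matrix (Fin m) (Fin nb) ℝ}
    {g : Matrix (Fin nb ⊕ Fin m) (Fin nb ⊕ Fin m) ℝ} (hg : g.PosDef)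
    (p : Fin nb → ℝ) :
    (hlM A g).mulVec p ⬝ᵥ g⁻¹.mulVec ((hlM A g).mulVec p)
      = p ⬝ᵥ (gbar A g)⁻¹.mulVec p := by
  have hdet : IsUnit g.det := hg.det_pos.ne'.isUnit
  have h1 : g⁻¹.mulVec ((hlM A g).mulVec p) = (hlD A * (gbar A g)⁻¹).mulVec p := by
    rw [Matrix.mulVec_mulVec, hlM, ← Matrix.mul_assoc, ← Matrix.mul_assoc,
      Matrix.nonsing_inv_mul g hdet, Matrix.one_mul]
  rw [h1, mulVec_dot_mulVec, ← Matrix.mul_assoc, hlMT_mul_hlD hg, Matrix.one_mul]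

end parti

section keyderiv
variable {nb m : ℕ}
variable {A : (Fin nb → ℝ) → Matrix (Fin m) (Fin nb) ℝ}
variable {g : (Fin nb → ℝ) → Matrix (Fin nb ⊕ Fin m) (Fin nb ⊕ Fin m) ℝ}
variable {f W : (Fin nb → ℝ) → ℝ}

lemma contDiff_AmulVec (hA : ∀ a i, ContDiff ℝ (⊤ : ℕ∞) fun r => A r a i)
    (u : Fin nb → ℝ) (a : Fin m) :
    ContDiff ℝ (⊤ : ℕ∞) fun r => (A r).mulVec u a := by
  simp only [Matrix.mulVec, dotProduct]
  exact ContDiff.sum fun j _ => (hA a j).mul contDiff_const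

lemma key_deriv (hA : ∀ a i, ContDiff ℝ (⊤ : ℕ∞) fun r => A r a i)
    (hg : ∀ i j, ContDiff ℝ (⊤ : ℕ∞) fun r => g r i j)
    (hgpos : ∀ r, (g r).PosDef)
    (hf : ContDiff ℝ (⊤ : ℕ∞) f) (hf0 : ∀ r, f r ≠ 0)
    (hW : ContDiff ℝ (⊤ : ℕ∞) W)
    (r u v : Fin nb → ℝ) :
    ∑ k, fderiv ℝ (fun r' => (hlM (A r') (g r')).mulVec ((f r')⁻¹ • grad W r') k) r v
        * (hlD (A r)).mulVec u k
      = fderiv ℝ (fun r' => ((f r')⁻¹ • grad W r') ⬝ᵥ u) r v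
        + ∑ a, (hlM (A r) (g r)).mulVec ((f r)⁻¹ • grad W r) (Sum.inr a)
            * fderiv ℝ (fun r' => (A r').mulVec u a) r v := by
  classical
  have hFdk : ∀ k, DifferentiableAt ℝ
      (fun r' => (hlM (A r') (g r')).mulVec ((f r')⁻¹ • grad W r') k) r := fun k =>
    (contDiff_Fdel_entry hA hg hgpos hf hf0 hW k).differentiable (by simp) r
  have hHinl : ∀ i : Fin nb,
      (fun r' => (hlD (A r')).mulVec u (Sum.inl i)) = fun _ => u i := by
    intro i; funext r'; exact hlD_mulVec_inl _ _ _
  have hHinr : ∀ a : Fin m,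
      (fun r' => (hlD (A r')).mulVec u (Sum.inr a)) = fun r' => -((A r').mulVec u a) := by
    intro a; funext r'; exact hlD_mulVec_inr _ _ _
  have hHk : ∀ k, DifferentiableAt ℝ (fun r' => (hlD (A r')).mulVec u k) r := by
    intro k
    cases k with
    | inl i => rw [hHinl]; exact differentiableAt_const _
    | inr a =>
      rw [hHinr]
      exact ((contDiff_AmulVec hA u a).differentiable (by simp) r).neg
  -- the sum of products and its derivative
  have hsum : HasFDerivAt
      (fun r' => ∑ k, (hlM (A r') (g r')).mulVec ((f r')⁻¹ • grad W r') k
        * (hlD (A r')).mulVec u k)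
      (∑ k, ((hlM (A r) (g r)).mulVec ((f r)⁻¹ • grad W r) k
          • fderiv ℝ (fun r' => (hlD (A r')).mulVec u k) r
        + (hlD (A r)).mulVec u k
          • fderiv ℝ (fun r' => (hlM (A r') (g r')).mulVec ((f r')⁻¹ • grad W r') k) r)) r :=
    HasFDerivAt.fun_sum fun k _ => ((hFdk k).hasFDerivAt.mul (hHk k).hasFDerivAt)
  have heq : (fun r' => ∑ k, (hlM (A r') (g r')).mulVec ((f r')⁻¹ • grad W r') k
        * (hlD (A r')).mulVec u k)
      = fun r' => ((f r')⁻¹ • grad W r') ⬝ᵥ u := by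
    funext r'
    exact hlM_dot (hgpos r') _ u
  rw [heq] at hsum
  have hDv : fderiv ℝ (fun r' => ((f r')⁻¹ • grad W r') ⬝ᵥ u) r v
      = ∑ k, ((hlM (A r) (g r)).mulVec ((f r)⁻¹ • grad W r) k
          * fderiv ℝ (fun r' => (hlD (A r')).mulVec u k) r v
        + (hlD (A r)).mulVec u k
          * fderiv ℝ (fun r' => (hlM (A r') (g r')).mulVec ((f r')⁻¹ • grad W r') k) r v) := by
    rw [hsum.fderiv]
    simp [ContinuousLinearMap.sum_apply, ContinuousLinearMap.add_apply,
      ContinuousLinearMap.smul_apply, smul_eq_mul]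
  -- the E_k terms
  have hEinl : ∀ i : Fin nb,
      fderiv ℝ (fun r' => (hlD (A r')).mulVec u (Sum.inl i)) r = 0 := by
    intro i; rw [hHinl]; exact fderiv_const_apply _
  have hEinr : ∀ a : Fin m,
      fderiv ℝ (fun r' => (hlD (A r')).mulVec u (Sum.inr a)) r v
        = -(fderiv ℝ (fun r' => (A r').mulVec u a) r v) := by
    intro a
    rw [hHinr, fderiv_fun_neg]
    simp
  have hE : ∑ k, (hlM (A r) (g r)).mulVec ((f r)⁻¹ • grad W r) k
        * fderiv ℝ (fun r' => (hlD (A r')).mulVec u k) r v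
      = -∑ a, (hlM (A r) (g r)).mulVec ((f r)⁻¹ • grad W r) (Sum.inr a)
        * fderiv ℝ (fun r' => (A r').mulVec u a) r v := by
    rw [Fintype.sum_sum_type]
    simp only [hEinl, ContinuousLinearMap.zero_apply, mul_zero, Finset.sum_const_zero, zero_add,
      hEinr, mul_neg, Finset.sum_neg_distrib]
  -- assemble
  have hgoal : ∑ k, fderiv ℝ
        (fun r' => (hlM (A r') (g r')).mulVec ((f r')⁻¹ • grad W r') k) r v
        * (hlD (A r)).mulVec u k
      = (∑ k, ((hlM (A r) (g r)).mulVec ((f r)⁻¹ • grad W r) k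
            * fderiv ℝ (fun r' => (hlD (A r')).mulVec u k) r v
          + (hlD (A r)).mulVec u k
            * fderiv ℝ (fun r' => (hlM (A r') (g r')).mulVec ((f r')⁻¹ • grad W r') k) r v))
        - ∑ k, (hlM (A r) (g r)).mulVec ((f r)⁻¹ • grad W r) k
            * fderiv ℝ (fun r' => (hlD (A r')).mulVec u k) r v := by
    rw [← Finset.sum_sub_distrib]
    congr 1
    funext k
    ring
  rw [hgoal, ← hDv, hE]
  ring
end keyderiv

section parts
variable {nb m : ℕ}
variable {A : (Fin nb → ℝ) → Matrix (Fin m) (Fin nb) ℝ}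
variable {f W : (Fin nb → ℝ) → ℝ}

lemma fderiv_AmulVec (hA : ∀ a i, ContDiff ℝ (⊤ : ℕ∞) fun r => A r a i)
    (u : Fin nb → ℝ) (a : Fin m) (r x : Fin nb → ℝ) :
    fderiv ℝ (fun r' => (A r').mulVec u a) r x
      = ∑ j, u j * fderiv ℝ (fun r' => A r' a j) r x := by
  have h : HasFDerivAt (fun r' => (A r').mulVec u a)
      (∑ j, u j • fderiv ℝ (fun r' => A r' a j) r) r := by
    have h2 : HasFDerivAt (fun r' => ∑ j, A r' a j * u j)
        (∑ j, u j • fderiv ℝ (fun r' => A r' a j) r) r :=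
      HasFDerivAt.fun_sum fun j _ =>
        ((hA a j).differentiable (by simp) r).hasFDerivAt.mul_const (u j)
    exact h2
  rw [h.fderiv]
  simp [ContinuousLinearMap.sum_apply, smul_eq_mul]

lemma curv_part (hA : ∀ a i, ContDiff ℝ (⊤ : ℕ∞) fun r => A r a i)
    (r v w : Fin nb → ℝ) (J : Fin m → ℝ) :
    ∑ a, J a * fderiv ℝ (fun r' => (A r').mulVec w a) r v
      - ∑ a, J a * fderiv ℝ (fun r' => (A r').mulVec v a) r w
    = J ⬝ᵥ curv A r v w := by
  rw [← Finset.sum_sub_distrib]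
  simp only [dotProduct, curv]
  apply Finset.sum_congr rfl
  intro a _
  rw [fderiv_AmulVec hA w a r v, fderiv_AmulVec hA v a r w]
  have hbv : ∀ (j : Fin nb), fderiv ℝ (fun r' => A r' a j) r v
      = ∑ i, v i * fderiv ℝ (fun r' => A r' a j) r (Pi.single i 1) := fun j =>
    fderiv_basis_apply _ r v
  have hbw : ∀ (j : Fin nb), fderiv ℝ (fun r' => A r' a j) r w
      = ∑ i, w i * fderiv ℝ (fun r' => A r' a j) r (Pi.single i 1) := fun j =>
    fderiv_basis_apply _ r w
  simp only [hbv, hbw]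
  rw [← mul_sub]
  congr 1
  simp only [Finset.mul_sum, ← Finset.sum_sub_distrib]
  rw [Finset.sum_comm]
  apply Finset.sum_congr rfl
  intro i _
  apply Finset.sum_congr rfl
  intro j _
  ring

lemma grad_dot (W : (Fin nb → ℝ) → ℝ) (r u : Fin nb → ℝ) :
    grad W r ⬝ᵥ u = fderiv ℝ W r u := by
  rw [fderiv_basis_apply W r u]
  simp only [dotProduct, grad]
  exact Finset.sum_congr rfl fun i _ => mul_comm _ _

lemma pbar_dot (f W : (Fin nb → ℝ) → ℝ) (r u : Fin nb → ℝ) :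
    ((f r)⁻¹ • grad W r) ⬝ᵥ u = (f r)⁻¹ * fderiv ℝ W r u := by
  rw [smul_dotProduct, grad_dot, smul_eq_mul]

lemma hj_part (hf : ContDiff ℝ (⊤ : ℕ∞) f) (hf0 : ∀ r, f r ≠ 0)
    (hW : ContDiff ℝ (⊤ : ℕ∞) W) (r v w : Fin nb → ℝ) :
    fderiv ℝ (fun r' => ((f r')⁻¹ • grad W r') ⬝ᵥ w) r v
      - fderiv ℝ (fun r' => ((f r')⁻¹ • grad W r') ⬝ᵥ v) r w
    = -(f r)⁻¹ * (fderiv ℝ f r v * (((f r)⁻¹ • grad W r) ⬝ᵥ w)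
        - fderiv ℝ f r w * (((f r)⁻¹ • grad W r) ⬝ᵥ v)) := by
  have hfd : ContDiff ℝ (⊤ : ℕ∞) (fderiv ℝ W) := hW.fderiv_right (by simp)
  have hψ : ∀ u : Fin nb → ℝ, DifferentiableAt ℝ (fun r' => fderiv ℝ W r' u) r := fun u =>
    ((hfd.clm_apply contDiff_const).differentiable (by simp)) r
  have hfinv : HasFDerivAt (fun y => (f y)⁻¹) ((-(f r ^ 2)⁻¹) • fderiv ℝ f r) r :=
    (hasDerivAt_inv (hf0 r)).comp_hasFDerivAt r
      ((hf.differentiable (by simp)) r).hasFDerivAt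
  have hfun : ∀ u : Fin nb → ℝ, (fun r' => ((f r')⁻¹ • grad W r') ⬝ᵥ u)
      = fun r' => (f r')⁻¹ * fderiv ℝ W r' u := by
    intro u; funext r'; exact pbar_dot f W r' u
  have hD : ∀ u : Fin nb → ℝ, fderiv ℝ (fun r' => ((f r')⁻¹ • grad W r') ⬝ᵥ u) r
      = (f r)⁻¹ • fderiv ℝ (fun r' => fderiv ℝ W r' u) r
        + fderiv ℝ W r u • ((-(f r ^ 2)⁻¹) • fderiv ℝ f r) := by
    intro u
    rw [hfun u]
    exact (hfinv.mul (hψ u).hasFDerivAt).fderiv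
  -- second derivative and symmetry
  have hdiff2 : DifferentiableAt ℝ (fderiv ℝ W) r :=
    (hfd.differentiable (by simp)) r
  have hclm : ∀ u : Fin nb → ℝ, fderiv ℝ (fun r' => fderiv ℝ W r' u) r
      = (fderiv ℝ (fderiv ℝ W) r).flip u := by
    intro u
    rw [fderiv_clm_apply hdiff2 (differentiableAt_const u)]
    simp
  have hsymm : ∀ v w : Fin nb → ℝ,
      fderiv ℝ (fderiv ℝ W) r v w = fderiv ℝ (fderiv ℝ W) r w v :=
    (hW.contDiffAt).isSymmSndFDerivAt (by rw [minSmoothness_of_isRCLikeNormedField]; exact_mod_cast ENat.natCast_le_of_coe_top_le_withTop le_rfl 2)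
  -- assemble
  rw [hD w, hD v]
  simp only [ContinuousLinearMap.add_apply, ContinuousLinearMap.smul_apply, smul_eq_mul,
    hclm, ContinuousLinearMap.flip_apply]
  rw [hsymm v w]
  rw [pbar_dot, pbar_dot]
  have h0 := hf0 r
  field_simp
  ring
end parts

theorem statement6 (nb m : ℕ)
    (A : (Fin nb → ℝ) → Matrix (Fin m) (Fin nb) ℝ)
    (g : (Fin nb → ℝ) → Matrix (Fin nb ⊕ Fin m) (Fin nb ⊕ Fin m) ℝ)
    (V f W : (Fin nb → ℝ) → ℝ) (E : ℝ)
    (hA : ∀ a i, ContDiff ℝ (⊤ : ℕ∞) fun r => A r a i)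
    (hg : ∀ i j, ContDiff ℝ (⊤ : ℕ∞) fun r => g r i j)
    (hgpos : ∀ r, (g r).PosDef)
    (hV : ContDiff ℝ (⊤ : ℕ∞) V)
    (hf : ContDiff ℝ (⊤ : ℕ∞) f) (hf0 : ∀ r, f r ≠ 0)
    (hW : ContDiff ℝ (⊤ : ℕ∞) W)
    -- sufficient condition for Hamiltonization: `df ∧ Θ̄ = f·Ξ` on `T*(ℝ^{n̄})`
    (hsuff : ∀ r pbar u v : Fin nb → ℝ,
      fderiv ℝ f r u * (pbar ⬝ᵥ v) - fderiv ℝ f r v * (pbar ⬝ᵥ u)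
        = f r * (momJ A g r pbar ⬝ᵥ curv A r u v))
    -- Chaplygin Hamilton–Jacobi equation `H̄(r, ∇W̄(r)/f(r)) = E`
    (hHJ : ∀ r : Fin nb → ℝ,
      (1 / 2) * (((f r)⁻¹ • grad W r) ⬝ᵥ (gbar (A r) (g r))⁻¹.mulVec ((f r)⁻¹ • grad W r))
        + V r = E) :
    -- (i) the nonholonomic Hamilton–Jacobi equation `H(q, γ(q)) = E`
    (∀ q : (Fin nb → ℝ) × (Fin m → ℝ),
        (1 / 2) * (gammaForm A g f W q ⬝ᵥ (g q.1)⁻¹.mulVec (gammaForm A g f W q))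
          + V q.1 = E)
      -- (ii) `dγ` vanishes on the constraint distribution
      ∧ (∀ (q : (Fin nb → ℝ) × (Fin m → ℝ)) (v w : Fin nb → ℝ),
          fderiv ℝ (gammaForm A g f W) q (v, -(A q.1).mulVec v)
              ⬝ᵥ Sum.elim w (-(A q.1).mulVec w)
            - fderiv ℝ (gammaForm A g f W) q (w, -(A q.1).mulVec w)
              ⬝ᵥ Sum.elim v (-(A q.1).mulVec v) = 0) := by
  constructor
  · -- part (i)
    intro q
    have hγ : gammaForm A g f W q
        = (hlM (A q.1) (g q.1)).mulVec ((f q.1)⁻¹ • grad W q.1) := rfl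
    rw [hγ, part_i_key (hgpos q.1) ((f q.1)⁻¹ • grad W q.1)]
    exact hHJ q.1
  · -- part (ii)
    intro q v w
    set r := q.1 with hr
    -- differentiability of the base one-form
    have hFdk : ∀ k, DifferentiableAt ℝ
        (fun r' => (hlM (A r') (g r')).mulVec ((f r')⁻¹ • grad W r') k) r := fun k =>
      (contDiff_Fdel_entry hA hg hgpos hf hf0 hW k).differentiable (by simp) r
    have hFdDiff : DifferentiableAt ℝ
        (fun r' => (hlM (A r') (g r')).mulVec ((f r')⁻¹ • grad W r')) r :=
      differentiableAt_pi.mpr hFdk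
    -- the derivative of gammaForm factors through the first projection
    have hcomp : HasFDerivAt (gammaForm A g f W)
        ((fderiv ℝ (fun r' => (hlM (A r') (g r')).mulVec ((f r')⁻¹ • grad W r')) r).comp
          (ContinuousLinearMap.fst ℝ (Fin nb → ℝ) (Fin m → ℝ))) q :=
      by have := HasFDerivAt.comp q (f := Prod.fst) hFdDiff.hasFDerivAt (hasFDerivAt_fst (p := q)); exact this
    have hγder : ∀ x : Fin nb → ℝ, ∀ y : Fin m → ℝ,
        fderiv ℝ (gammaForm A g f W) q (x, y)
          = fderiv ℝ (fun r' => (hlM (A r') (g r')).mulVec ((f r')⁻¹ • grad W r')) r x := by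
      intro x y
      rw [hcomp.fderiv]
      rfl
    have hpi : ∀ (x : Fin nb → ℝ) (k : Fin nb ⊕ Fin m),
        fderiv ℝ (fun r' => (hlM (A r') (g r')).mulVec ((f r')⁻¹ • grad W r')) r x k
          = fderiv ℝ (fun r' => (hlM (A r') (g r')).mulVec ((f r')⁻¹ • grad W r') k) r x := by
      intro x k
      rw [fderiv_pi hFdk]
      rfl
    have helim : ∀ u : Fin nb → ℝ,
        Sum.elim u (-(A r).mulVec u) = (hlD (A r)).mulVec u := by
      intro u
      funext k
      cases k with
      | inl i => simp [hlD_mulVec_inl]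
      | inr a => simp [hlD_mulVec_inr]
    rw [hγder v (-(A r).mulVec v), hγder w (-(A r).mulVec w), helim, helim]
    simp only [dotProduct, hpi]
    rw [key_deriv hA hg hgpos hf hf0 hW r w v, key_deriv hA hg hgpos hf hf0 hW r v w]
    have hcurv := curv_part hA r v w
      (fun a => (hlM (A r) (g r)).mulVec ((f r)⁻¹ • grad W r) (Sum.inr a))
    have hhj := hj_part hf hf0 hW r v w
    have hs := hsuff r ((f r)⁻¹ • grad W r) v w
    have hJ : momJ A g r ((f r)⁻¹ • grad W r)
        = fun a => (hlM (A r) (g r)).mulVec ((f r)⁻¹ • grad W r) (Sum.inr a) := rfl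
    rw [hJ] at hs
    rw [hs] at hhj
    have hXY : fderiv ℝ (fun r' => ((f r')⁻¹ • grad W r') ⬝ᵥ w) r v
        - fderiv ℝ (fun r' => ((f r')⁻¹ • grad W r') ⬝ᵥ v) r w
        = -((fun a => (hlM (A r) (g r)).mulVec ((f r)⁻¹ • grad W r) (Sum.inr a))
            ⬝ᵥ curv A r v w) := by
      rw [hhj, ← mul_assoc, neg_mul, inv_mul_cancel₀ (hf0 r), neg_one_mul]
    linarith [hcurv, hXY]
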